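/- Let a, b > 0 and give four bodies equal masses μ_1 = μ_2 = μ_3 = μ_4 = μ with 4μ = 1. Then there exist x > 0 and y > 0 such that the points p_1 = (x, 0), p_2 = (0, y), p_3 = (−x, 0), p_4 = (0, −y) satisfy the anisotropic central configuration equations (for every i, a x_i = Σ_{j≠i} μ_j (x_i − x_j)/r_{ij}³ and b y_i = Σ_{j≠i} μ_j (y_i − y_j)/r_{ij}³, where r_{ij} = |p_i − p_j|), i.e. they form a rhombus symmetric with respect to both coordinate axes. Moreover: (1) the ratio of half-diagonals κ = y/x is the unique positive solution of (8κ³ + (κ√(1+κ²))³)/(8κ³ + (√(1+κ²))³) = a/b; (2) the side length r = √(x² + y²) satisfies r > (9μ/(4·min{a,b}))^{1/3}; and (3) in that range r is the unique solution of (2μ/(a r³ − 2μ))^{2/3} + (2μ/(b r³ − 2μ))^{2/3} = 4. -/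

import Mathlib

open Finset

abbrev E2 : Type := EuclideanSpace ℝ (Fin 2)

/-- The anisotropic central configuration equations for points `p_i = (x_i, y_i)`:
`a x_i = Σ_{j≠i} μ_j (x_i − x_j)/r_{ij}³` and `b y_i = Σ_{j≠i} μ_j (y_i − y_j)/r_{ij}³`. -/
def AnisoCC {k : ℕ} (a b : ℝ) (μ : Fin k → ℝ) (p : Fin k → E2) : Prop :=
  ∀ i, (a * p i 0 = ∑ j ∈ Finset.univ.filter (· ≠ i), μ j * (p i 0 - p j 0) / ‖p i - p j‖ ^ 3) ∧
       (b * p i 1 = ∑ j ∈ Finset.univ.filter (· ≠ i), μ j * (p i 1 - p j 1) / ‖p i - p j‖ ^ 3)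

/-- The point `(a, b)` of the Euclidean plane. -/
noncomputable def pt (a b : ℝ) : E2 := (WithLp.equiv 2 (Fin 2 → ℝ)).symm ![a, b]

/-! ### auxiliary lemmas -/

lemma aux_norm_pt_sub (u v s t : ℝ) : ‖pt u v - pt s t‖ = Real.sqrt ((u-s)^2 + (v-t)^2) := by
  rw [EuclideanSpace.norm_eq]
  congr 1
  rw [Fin.sum_univ_two]
  simp [pt, Real.norm_eq_abs, sq_abs]

@[simp] lemma aux_pt_apply0 (u v : ℝ) : pt u v 0 = u := rfl
@[simp] lemma aux_pt_apply1 (u v : ℝ) : pt u v 1 = v := rfl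

lemma aux_anisoCC_rhombus (a b μ x y : ℝ) (hx : 0 < x) (hy : 0 < y)
    (h1 : a = 2*μ/Real.sqrt (x^2+y^2)^3 + μ/(4*x^3))
    (h2 : b = 2*μ/Real.sqrt (x^2+y^2)^3 + μ/(4*y^3)) :
    AnisoCC a b (fun _ : Fin 4 => μ) ![pt x 0, pt 0 y, pt (-x) 0, pt 0 (-y)] := by
  set r := Real.sqrt (x^2+y^2) with hrdef
  have hr : 0 < r := Real.sqrt_pos.mpr (by positivity)
  have hrr : ∀ u v s t : ℝ, (u-s)^2+(v-t)^2 = x^2+y^2 → ‖pt u v - pt s t‖ = r := by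
    intro u v s t h; rw [aux_norm_pt_sub, h]
  have n01 : ‖pt x 0 - pt 0 y‖ = r := hrr _ _ _ _ (by ring)
  have n03 : ‖pt x 0 - pt 0 (-y)‖ = r := hrr _ _ _ _ (by ring)
  have n10 : ‖pt 0 y - pt x 0‖ = r := hrr _ _ _ _ (by ring)
  have n12 : ‖pt 0 y - pt (-x) 0‖ = r := hrr _ _ _ _ (by ring)
  have n21 : ‖pt (-x) 0 - pt 0 y‖ = r := hrr _ _ _ _ (by ring)
  have n23 : ‖pt (-x) 0 - pt 0 (-y)‖ = r := hrr _ _ _ _ (by ring)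
  have n30 : ‖pt 0 (-y) - pt x 0‖ = r := hrr _ _ _ _ (by ring)
  have n32 : ‖pt 0 (-y) - pt (-x) 0‖ = r := hrr _ _ _ _ (by ring)
  have n02 : ‖pt x 0 - pt (-x) 0‖ = 2*x := by
    rw [aux_norm_pt_sub, show (x-(-x))^2+((0:ℝ)-0)^2 = (2*x)^2 by ring,
      Real.sqrt_sq (by positivity)]
  have n20 : ‖pt (-x) 0 - pt x 0‖ = 2*x := by
    rw [aux_norm_pt_sub, show ((-x)-x)^2+((0:ℝ)-0)^2 = (2*x)^2 by ring,
      Real.sqrt_sq (by positivity)]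
  have n13 : ‖pt 0 y - pt 0 (-y)‖ = 2*y := by
    rw [aux_norm_pt_sub, show ((0:ℝ)-0)^2+(y-(-y))^2 = (2*y)^2 by ring,
      Real.sqrt_sq (by positivity)]
  have n31 : ‖pt 0 (-y) - pt 0 y‖ = 2*y := by
    rw [aux_norm_pt_sub, show ((0:ℝ)-0)^2+((-y)-y)^2 = (2*y)^2 by ring,
      Real.sqrt_sq (by positivity)]
  have hx3 : x^3 ≠ 0 := by positivity
  have hy3 : y^3 ≠ 0 := by positivity
  have hr3 : r^3 ≠ 0 := by positivity
  intro i
  fin_cases i <;>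
    constructor <;>
    · rw [Finset.filter_ne', Finset.sum_erase_eq_sub (Finset.mem_univ _), Fin.sum_univ_four]
      simp only [Matrix.cons_val_zero, Matrix.cons_val_one, Matrix.head_cons,
        Matrix.cons_val_two, Matrix.tail_cons, Matrix.cons_val_three, Fin.isValue,
        ne_eq, aux_pt_apply0, aux_pt_apply1]
      norm_num [sub_self, norm_zero, n01, n02, n03, n10, n12, n13, n20, n21, n23, n30, n31, n32]
      first
        | (rw [h1]; field_simp; ring)
        | (rw [h2]; field_simp; ring)
        | (field_simp; ring)
        | ring

lemma aux_cube_rpow (q : ℝ) (hq : 0 ≤ q) : (q ^ ((1:ℝ)/3))^(3:ℕ) = q := by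
  rw [← Real.rpow_natCast (q ^ ((1:ℝ)/3)) 3, ← Real.rpow_mul hq]
  norm_num

lemma aux_sq_rpow (q : ℝ) (hq : 0 ≤ q) : (q ^ ((1:ℝ)/3))^(2:ℕ) = q ^ ((2:ℝ)/3) := by
  rw [← Real.rpow_natCast (q ^ ((1:ℝ)/3)) 2, ← Real.rpow_mul hq]
  norm_num

lemma aux_h84 : (8:ℝ)^((2:ℝ)/3) = 4 := by
  rw [show (8:ℝ) = 2^(3:ℕ) by norm_num, ← Real.rpow_natCast 2 3, ← Real.rpow_mul (by norm_num)]
  rw [show ((3:ℕ):ℝ)*(2/3) = 2 by norm_num, show (2:ℝ) = ((2:ℕ):ℝ) by norm_num, Real.rpow_natCast]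
  norm_num

lemma aux_Gmono (k1 k2 : ℝ) (h1 : 0 < k1) (h2 : k1 < k2) :
    (8 * k1 ^ 3 + (k1 * Real.sqrt (1 + k1 ^ 2)) ^ 3) /
      (8 * k1 ^ 3 + (Real.sqrt (1 + k1 ^ 2)) ^ 3) <
    (8 * k2 ^ 3 + (k2 * Real.sqrt (1 + k2 ^ 2)) ^ 3) /
      (8 * k2 ^ 3 + (Real.sqrt (1 + k2 ^ 2)) ^ 3) := by
  have hk2 : 0 < k2 := h1.trans h2
  set t1 := Real.sqrt (1 + k1 ^ 2) with ht1d
  set t2 := Real.sqrt (1 + k2 ^ 2) with ht2d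
  have ht1 : 0 < t1 := Real.sqrt_pos.mpr (by positivity)
  have ht2 : 0 < t2 := Real.sqrt_pos.mpr (by positivity)
  have ht1s : t1 ^ 2 = 1 + k1 ^ 2 := Real.sq_sqrt (by positivity)
  have ht2s : t2 ^ 2 = 1 + k2 ^ 2 := Real.sq_sqrt (by positivity)
  have htlt : t1 < t2 := by
    rw [ht1d, ht2d]
    exact Real.sqrt_lt_sqrt (by positivity) (by nlinarith)
  have key : k1 * t2 < k2 * t1 := by
    apply lt_of_pow_lt_pow_left₀ 2 (by positivity)
    nlinarith
  have key3 : (k1 * t2) ^ 3 < (k2 * t1) ^ 3 := pow_lt_pow_left₀ key (by positivity) (by norm_num)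
  have k13 : k1 ^ 3 < k2 ^ 3 := pow_lt_pow_left₀ h2 h1.le (by norm_num)
  have t13 : t1 ^ 3 < t2 ^ 3 := pow_lt_pow_left₀ htlt ht1.le (by norm_num)
  rw [div_lt_div_iff₀ (by positivity) (by positivity)]
  have e1 : (k1 * t2) ^ 3 = k1 ^ 3 * t2 ^ 3 := by ring
  have e2 : (k2 * t1) ^ 3 = k2 ^ 3 * t1 ^ 3 := by ring
  rw [e1, e2] at key3
  have P1 : 0 < t1 ^ 3 * t2 ^ 3 * (k2 ^ 3 - k1 ^ 3) := by
    apply mul_pos (by positivity); linarith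
  have P2 : 0 < k1 ^ 3 * k2 ^ 3 * (t2 ^ 3 - t1 ^ 3) := by
    apply mul_pos (by positivity); linarith
  nlinarith [key3, P1, P2]

noncomputable def ff (a b μ r : ℝ) : ℝ :=
  (2 * μ / (a * r ^ 3 - 2 * μ)) ^ ((2:ℝ)/3) + (2 * μ / (b * r ^ 3 - 2 * μ)) ^ ((2:ℝ)/3)

lemma aux_rexists (a b μ : ℝ) (ha : 0 < a) (hb : 0 < b) (hμ : 0 < μ) :
    ∃ r, (9 * μ / (4 * min a b)) ^ ((1:ℝ)/3) < r ∧ ff a b μ r = 4 ∧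
      (∀ r1 r2, (9 * μ / (4 * min a b)) ^ ((1:ℝ)/3) < r1 → r1 < r2 → ff a b μ r2 < ff a b μ r1) ∧
      (∀ c r', min a b ≤ c → (9 * μ / (4 * min a b)) ^ ((1:ℝ)/3) ≤ r' → 2 * μ < c * r' ^ 3) := by
  set m := min a b with hmd
  have hm : 0 < m := lt_min ha hb
  have hma : m ≤ a := min_le_left a b
  have hmb : m ≤ b := min_le_right a b
  set r0 := (9 * μ / (4 * m)) ^ ((1:ℝ)/3) with hr0d
  have hr0 : 0 < r0 := Real.rpow_pos_of_pos (by positivity) _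
  have hr0c : r0 ^ (3:ℕ) = 9 * μ / (4 * m) := aux_cube_rpow _ (by positivity)
  have hden : ∀ c r : ℝ, m ≤ c → r0 ≤ r → 2 * μ < c * r ^ 3 := by
    intro c r hc hr
    have h3 : r0 ^ (3:ℕ) ≤ r ^ (3:ℕ) := pow_le_pow_left₀ hr0.le hr 3
    have : 9 * μ / 4 ≤ m * r ^ 3 := by
      calc 9 * μ / 4 = m * (9 * μ / (4 * m)) := by field_simp
      _ = m * r0 ^ (3:ℕ) := by rw [hr0c]
      _ ≤ m * r ^ (3:ℕ) := by nlinarith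
    nlinarith [mul_le_mul_of_nonneg_right hc (show (0:ℝ) ≤ r ^ 3 by nlinarith)]
  have hanti : ∀ r1 r2, r0 < r1 → r1 < r2 → ff a b μ r2 < ff a b μ r1 := by
    intro r1 r2 hr1 hr2
    have hA1 : 2 * μ < a * r1 ^ 3 := hden a r1 hma hr1.le
    have hB1 : 2 * μ < b * r1 ^ 3 := hden b r1 hmb hr1.le
    have hA2 : 2 * μ < a * r2 ^ 3 := hden a r2 hma (hr1.trans hr2).le
    have hB2 : 2 * μ < b * r2 ^ 3 := hden b r2 hmb (hr1.trans hr2).le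
    have hc3 : r1 ^ 3 < r2 ^ 3 := pow_lt_pow_left₀ hr2 (hr0.trans hr1).le (by norm_num)
    have hAlt : a * r1 ^ 3 - 2*μ < a * r2 ^ 3 - 2*μ := by nlinarith
    have hBlt : b * r1 ^ 3 - 2*μ < b * r2 ^ 3 - 2*μ := by nlinarith
    have t1 : 2*μ/(a * r2 ^ 3 - 2*μ) < 2*μ/(a * r1 ^ 3 - 2*μ) :=
      div_lt_div_of_pos_left (by linarith) (by linarith) hAlt
    have t2 : 2*μ/(b * r2 ^ 3 - 2*μ) < 2*μ/(b * r1 ^ 3 - 2*μ) :=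
      div_lt_div_of_pos_left (by linarith) (by linarith) hBlt
    unfold ff
    have p1 : 0 < 2*μ/(a * r2 ^ 3 - 2*μ) := div_pos (by linarith) (by linarith)
    have p2 : 0 < 2*μ/(b * r2 ^ 3 - 2*μ) := div_pos (by linarith) (by linarith)
    have e1 := Real.rpow_lt_rpow p1.le t1 (show (0:ℝ) < 2/3 by norm_num)
    have e2 := Real.rpow_lt_rpow p2.le t2 (show (0:ℝ) < 2/3 by norm_num)
    linarith
  have hfr0 : 4 < ff a b μ r0 := by
    have hterm : ∀ c : ℝ, m = c → (2 * μ / (c * r0 ^ 3 - 2 * μ)) ^ ((2:ℝ)/3) = 4 := by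
      intro c hc
      have : c * r0 ^ 3 - 2 * μ = μ / 4 := by
        rw [← hc, show r0 ^ 3 = r0 ^ (3:ℕ) by norm_num, hr0c]
        field_simp; ring
      rw [this, show 2 * μ / (μ / 4) = 8 by field_simp; ring, aux_h84]
    have hpos : ∀ c : ℝ, m ≤ c → 0 < (2 * μ / (c * r0 ^ 3 - 2 * μ)) ^ ((2:ℝ)/3) := by
      intro c hc
      have := hden c r0 hc le_rfl
      exact Real.rpow_pos_of_pos (div_pos (by linarith) (by linarith)) _
    unfold ff
    rcases min_cases a b with ⟨h1, h2⟩ | ⟨h1, h2⟩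
    · rw [hterm a h1]
      linarith [hpos b hmb]
    · rw [hterm b h1]
      linarith [hpos a hma]
  obtain ⟨R, hR0, hfR⟩ : ∃ R, r0 < R ∧ ff a b μ R ≤ 2 := by
    set c := (4 * μ / m) ^ ((1:ℝ)/3) with hcd
    have hc : 0 < c := Real.rpow_pos_of_pos (by positivity) _
    have hcc : c ^ (3:ℕ) = 4 * μ / m := aux_cube_rpow _ (by positivity)
    refine ⟨r0 + c, by linarith, ?_⟩
    have hRc : c ^ (3:ℕ) ≤ (r0 + c) ^ (3:ℕ) := pow_le_pow_left₀ hc.le (by linarith) 3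
    have hmR : 4 * μ ≤ m * (r0 + c) ^ 3 := by
      have : 4 * μ = m * (4 * μ / m) := by field_simp
      rw [this, ← hcc]
      have : (0:ℝ) ≤ m := hm.le
      push_cast at hRc ⊢
      nlinarith
    have hterm1 : ∀ d : ℝ, m ≤ d → (2 * μ / (d * (r0 + c) ^ 3 - 2 * μ)) ^ ((2:ℝ)/3) ≤ 1 := by
      intro d hd
      have hd3 : 4 * μ ≤ d * (r0 + c) ^ 3 := by
        nlinarith [mul_le_mul_of_nonneg_right hd (show (0:ℝ) ≤ (r0+c)^3 by positivity)]
      have hq : 2 * μ / (d * (r0 + c) ^ 3 - 2 * μ) ≤ 1 := by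
        rw [div_le_one (by linarith)]; linarith
      calc (2 * μ / (d * (r0 + c) ^ 3 - 2 * μ)) ^ ((2:ℝ)/3)
          ≤ 1 ^ ((2:ℝ)/3) := Real.rpow_le_rpow (div_pos (by linarith) (by linarith)).le hq (by norm_num)
        _ = 1 := Real.one_rpow _
    unfold ff
    linarith [hterm1 a hma, hterm1 b hmb]
  have hcont : ContinuousOn (ff a b μ) (Set.Icc r0 R) := by
    have hterm : ∀ c : ℝ, m ≤ c → ContinuousOn (fun r : ℝ => (2 * μ / (c * r ^ 3 - 2 * μ)) ^ ((2:ℝ)/3)) (Set.Icc r0 R) := by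
      intro c hc
      apply ContinuousOn.rpow_const
      · apply ContinuousOn.div continuousOn_const
        · fun_prop
        · intro r hr
          have := hden c r hc hr.1
          intro h; rw [sub_eq_zero] at h; rw [h] at this; linarith
      · intro r hr; right; norm_num
    exact (hterm a hma).add (hterm b hmb)
  have h4 : (4:ℝ) ∈ Set.Icc (ff a b μ R) (ff a b μ r0) := ⟨by linarith, by linarith⟩
  obtain ⟨r, hrmem, hreq⟩ := intermediate_value_Icc' hR0.le hcont h4
  refine ⟨r, ?_, hreq, hanti, hden⟩
  rcases eq_or_lt_of_le hrmem.1 with h | h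
  · exfalso; rw [h, hreq] at hfr0; linarith
  · exact h

/-- for `a, b > 0` and four equal masses `μ = 1/4`, there is an anisotropic
central configuration forming a rhombus `(±x, 0), (0, ±y)` symmetric with respect to both
coordinate axes; the ratio of half-diagonals `κ = y/x` is the unique positive solution of
`(8κ³ + (κ√(1+κ²))³)/(8κ³ + (√(1+κ²))³) = a/b`, the side `r = √(x²+y²)` satisfies
`r > (9μ/(4 min{a,b}))^{1/3}`, and in that range `r` is the unique solution of
`(2μ/(ar³−2μ))^{2/3} + (2μ/(br³−2μ))^{2/3} = 4`. -/
theorem stmt17 (a b μ : ℝ) (ha : 0 < a) (hb : 0 < b) (hμ : 0 < μ) (hμ1 : 4 * μ = 1) :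
    ∃ x > (0 : ℝ), ∃ y > (0 : ℝ),
      AnisoCC a b (fun _ : Fin 4 => μ) ![pt x 0, pt 0 y, pt (-x) 0, pt 0 (-y)] ∧
      ((8 * (y / x) ^ 3 + (y / x * Real.sqrt (1 + (y / x) ^ 2)) ^ 3) /
          (8 * (y / x) ^ 3 + (Real.sqrt (1 + (y / x) ^ 2)) ^ 3) = a / b ∧
        ∀ κ : ℝ, 0 < κ →
          (8 * κ ^ 3 + (κ * Real.sqrt (1 + κ ^ 2)) ^ 3) /
            (8 * κ ^ 3 + (Real.sqrt (1 + κ ^ 2)) ^ 3) = a / b → κ = y / x) ∧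
      ((9 * μ / (4 * min a b)) ^ ((1 : ℝ) / 3) < Real.sqrt (x ^ 2 + y ^ 2) ∧
        (2 * μ / (a * Real.sqrt (x ^ 2 + y ^ 2) ^ 3 - 2 * μ)) ^ ((2 : ℝ) / 3) +
          (2 * μ / (b * Real.sqrt (x ^ 2 + y ^ 2) ^ 3 - 2 * μ)) ^ ((2 : ℝ) / 3) = 4 ∧
        ∀ r : ℝ, (9 * μ / (4 * min a b)) ^ ((1 : ℝ) / 3) < r →
          (2 * μ / (a * r ^ 3 - 2 * μ)) ^ ((2 : ℝ) / 3) +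
            (2 * μ / (b * r ^ 3 - 2 * μ)) ^ ((2 : ℝ) / 3) = 4 →
          r = Real.sqrt (x ^ 2 + y ^ 2)) := by
  obtain ⟨r, hrgt, hfr, hanti, hden⟩ := aux_rexists a b μ ha hb hμ
  have hr0pos : 0 < (9 * μ / (4 * min a b)) ^ ((1:ℝ)/3) :=
    Real.rpow_pos_of_pos (div_pos (by positivity) (by have := lt_min ha hb; linarith)) _
  have hr : 0 < r := hr0pos.trans hrgt
  have hA : 2 * μ < a * r ^ 3 := hden a r (min_le_left a b) hrgt.le
  have hB : 2 * μ < b * r ^ 3 := hden b r (min_le_right a b) hrgt.le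
  have hApos : 0 < a * r ^ 3 - 2 * μ := by linarith
  have hBpos : 0 < b * r ^ 3 - 2 * μ := by linarith
  set A := a * r ^ 3 - 2 * μ with hAd
  set B := b * r ^ 3 - 2 * μ with hBd
  obtain ⟨x, hxd⟩ : ∃ x : ℝ, x = r * (μ / (4 * A)) ^ ((1:ℝ)/3) := ⟨_, rfl⟩
  obtain ⟨y, hyd⟩ : ∃ y : ℝ, y = r * (μ / (4 * B)) ^ ((1:ℝ)/3) := ⟨_, rfl⟩
  have hx : 0 < x := hxd ▸ mul_pos hr (Real.rpow_pos_of_pos (by positivity) _)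
  have hy : 0 < y := hyd ▸ mul_pos hr (Real.rpow_pos_of_pos (by positivity) _)
  have hx3 : x ^ 3 = r ^ 3 * (μ / (4 * A)) := by
    rw [hxd, mul_pow, show ((μ / (4 * A)) ^ ((1:ℝ)/3)) ^ 3 = ((μ / (4 * A)) ^ ((1:ℝ)/3)) ^ (3:ℕ) by norm_num,
      aux_cube_rpow _ (by positivity)]
  have hy3 : y ^ 3 = r ^ 3 * (μ / (4 * B)) := by
    rw [hyd, mul_pow, show ((μ / (4 * B)) ^ ((1:ℝ)/3)) ^ 3 = ((μ / (4 * B)) ^ ((1:ℝ)/3)) ^ (3:ℕ) by norm_num,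
      aux_cube_rpow _ (by positivity)]
  have hx2 : x ^ 2 = r ^ 2 * (μ / (4 * A)) ^ ((2:ℝ)/3) := by
    rw [hxd, mul_pow, show ((μ / (4 * A)) ^ ((1:ℝ)/3)) ^ 2 = ((μ / (4 * A)) ^ ((1:ℝ)/3)) ^ (2:ℕ) by norm_num,
      aux_sq_rpow _ (by positivity)]
  have hy2 : y ^ 2 = r ^ 2 * (μ / (4 * B)) ^ ((2:ℝ)/3) := by
    rw [hyd, mul_pow, show ((μ / (4 * B)) ^ ((1:ℝ)/3)) ^ 2 = ((μ / (4 * B)) ^ ((1:ℝ)/3)) ^ (2:ℕ) by norm_num,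
      aux_sq_rpow _ (by positivity)]
  have hqA : (2 * μ / A) ^ ((2:ℝ)/3) = 4 * (μ / (4 * A)) ^ ((2:ℝ)/3) := by
    rw [show 2 * μ / A = 8 * (μ / (4 * A)) by field_simp; ring,
      Real.mul_rpow (by norm_num) (by positivity), aux_h84]
  have hqB : (2 * μ / B) ^ ((2:ℝ)/3) = 4 * (μ / (4 * B)) ^ ((2:ℝ)/3) := by
    rw [show 2 * μ / B = 8 * (μ / (4 * B)) by field_simp; ring,
      Real.mul_rpow (by norm_num) (by positivity), aux_h84]
  have hffr : (2 * μ / A) ^ ((2:ℝ)/3) + (2 * μ / B) ^ ((2:ℝ)/3) = 4 := hfr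
  rw [hqA, hqB] at hffr
  have hr2 : x ^ 2 + y ^ 2 = r ^ 2 := by
    rw [hx2, hy2]; linear_combination (r^2/4) * hffr
  have hsq : Real.sqrt (x ^ 2 + y ^ 2) = r := by
    rw [hr2]; exact Real.sqrt_sq hr.le
  have heq1 : a = 2 * μ / r ^ 3 + μ / (4 * x ^ 3) := by
    rw [hx3, hAd]; field_simp; ring
  have heq2 : b = 2 * μ / r ^ 3 + μ / (4 * y ^ 3) := by
    rw [hy3, hBd]; field_simp; ring
  have ka : a * (4 * x ^ 3 * r ^ 3) = μ * (8 * x ^ 3 + r ^ 3) := by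
    rw [heq1]; field_simp; ring
  have kb : b * (4 * y ^ 3 * r ^ 3) = μ * (8 * y ^ 3 + r ^ 3) := by
    rw [heq2]; field_simp; ring
  have hsqrt1 : Real.sqrt (1 + (y / x) ^ 2) = r / x := by
    rw [show 1 + (y / x) ^ 2 = (r / x) ^ 2 by
        field_simp; linear_combination hr2]
    exact Real.sqrt_sq (by positivity)
  have hGyx : (8 * (y / x) ^ 3 + (y / x * Real.sqrt (1 + (y / x) ^ 2)) ^ 3) /
      (8 * (y / x) ^ 3 + (Real.sqrt (1 + (y / x) ^ 2)) ^ 3) = a / b := by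
    have hkey : b * (y ^ 3 * (8 * x ^ 3 + r ^ 3)) = a * (x ^ 3 * (8 * y ^ 3 + r ^ 3)) := by
      apply mul_left_cancel₀ hμ.ne'
      linear_combination (a * x ^ 3) * kb - (b * y ^ 3) * ka
    rw [hsqrt1, div_eq_div_iff (by positivity) hb.ne']
    field_simp
    linear_combination hkey
  refine ⟨x, hx, y, hy, ?_, ⟨hGyx, ?_⟩, ?_, ?_, ?_⟩
  · exact aux_anisoCC_rhombus a b μ x y hx hy (by rw [hsq]; exact heq1) (by rw [hsq]; exact heq2)
  · intro κ hκ hκeq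
    rcases lt_trichotomy κ (y / x) with h | h | h
    · exfalso
      have := aux_Gmono κ (y / x) hκ h
      rw [hκeq, hGyx] at this; exact lt_irrefl _ this
    · exact h
    · exfalso
      have := aux_Gmono (y / x) κ (by positivity) h
      rw [hκeq, hGyx] at this; exact lt_irrefl _ this
  · rw [hsq]; exact hrgt
  · rw [hsq]; exact hfr
  · intro r' hr'gt hr'eq
    rw [hsq]
    have hffr' : ff a b μ r' = 4 := hr'eq
    rcases lt_trichotomy r' r with h | h | h
    · exfalso
      have := hanti r' r hr'gt h
      rw [hffr', hfr] at this; exact lt_irrefl _ this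
    · exact h
    · exfalso
      have := hanti r r' hrgt h
      rw [hffr', hfr] at this; exact lt_irrefl _ this
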